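/- For two Hermitian positive definite matrices p₁, p₂ and any invertible matrix a, the geodesic is equivariant under congruence: a* η(p₁,p₂,t) a = η(a* p₁ a, a* p₂ a, t) for every t ∈ [0,1]. -/

import Mathlib

open Matrix
open scoped ComplexOrder Classical

/-- Matrix logarithm of a Hermitian (in particular HPD) matrix, via the spectral theorem. -/
noncomputable def mLog {d : ℕ} (A : Matrix (Fin d) (Fin d) ℂ) : Matrix (Fin d) (Fin d) ℂ :=
  if hA : A.IsHermitian then
    (hA.eigenvectorUnitary : Matrix (Fin d) (Fin d) ℂ) *
      Matrix.diagonal (fun i => (Real.log (hA.eigenvalues i) : ℂ)) *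
      (star hA.eigenvectorUnitary : Matrix (Fin d) (Fin d) ℂ)
  else 0

/-- Matrix exponential. -/
noncomputable def mExp {d : ℕ} (A : Matrix (Fin d) (Fin d) ℂ) : Matrix (Fin d) (Fin d) ℂ :=
  NormedSpace.exp A

/-- Hermitian positive (semi)definite square root. -/
noncomputable def msqrt {d : ℕ} (A : Matrix (Fin d) (Fin d) ℂ) : Matrix (Fin d) (Fin d) ℂ :=
  if hA : A.PosSemidef then
    hA.1.eigenvectorUnitary.1 * diagonal ((↑) ∘ (√·) ∘ hA.1.eigenvalues) *
      (star hA.1.eigenvectorUnitary.1)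
  else 1

/-- Frobenius norm. -/
noncomputable def frobNorm {d : ℕ} (A : Matrix (Fin d) (Fin d) ℂ) : ℝ :=
  Real.sqrt ((Aᴴ * A).trace.re)

/-- Affine-invariant Riemannian distance. -/
noncomputable def deltaR {d : ℕ} (p₁ p₂ : Matrix (Fin d) (Fin d) ℂ) : ℝ :=
  frobNorm (mLog ((msqrt p₁)⁻¹ * p₂ * (msqrt p₁)⁻¹))

/-- Real matrix power of an HPD matrix: `x^t = Exp (t • Log x)`. -/
noncomputable def mPow {d : ℕ} (A : Matrix (Fin d) (Fin d) ℂ) (t : ℝ) : Matrix (Fin d) (Fin d) ℂ :=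
  mExp ((t : ℂ) • mLog A)

/-- Riemannian logarithmic map at `p`. -/
noncomputable def logMap {d : ℕ} (p q : Matrix (Fin d) (Fin d) ℂ) : Matrix (Fin d) (Fin d) ℂ :=
  msqrt p * mLog ((msqrt p)⁻¹ * q * (msqrt p)⁻¹) * msqrt p

/-- Riemannian exponential map at `p`. -/
noncomputable def expMap {d : ℕ} (p h : Matrix (Fin d) (Fin d) ℂ) : Matrix (Fin d) (Fin d) ℂ :=
  msqrt p * mExp ((msqrt p)⁻¹ * h * (msqrt p)⁻¹) * msqrt p

/-- Affine-invariant geodesic from `p₁` to `p₂`. -/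
noncomputable def geo {d : ℕ} (p₁ p₂ : Matrix (Fin d) (Fin d) ℂ) (t : ℝ) :
    Matrix (Fin d) (Fin d) ℂ :=
  msqrt p₁ * mPow ((msqrt p₁)⁻¹ * p₂ * (msqrt p₁)⁻¹) t * msqrt p₁


section Aux

variable {d : ℕ}

lemma posDef_conj {M c : Matrix (Fin d) (Fin d) ℂ} (hM : M.PosDef) (hc : IsUnit c.det) :
    (cᴴ * M * c).PosDef := by
  have hinj : Function.Injective c.mulVec :=
    mulVec_injective_iff_isUnit.2 ((isUnit_iff_isUnit_det c).2 hc)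
  exact hM.conjTranspose_mul_mul_same hinj

lemma msqrt_eq {A : Matrix (Fin d) (Fin d) ℂ} (hA : A.PosDef) :
    msqrt A = cfc Real.sqrt A := by
  rw [hA.1.cfc_eq, msqrt, dif_pos hA.posSemidef]
  rfl

lemma msqrt_hermitian {A : Matrix (Fin d) (Fin d) ℂ} (hA : A.PosDef) :
    (msqrt A).IsHermitian := by
  rw [msqrt_eq hA]; exact (cfc_predicate Real.sqrt A : IsSelfAdjoint _)

lemma msqrt_mul_self {A : Matrix (Fin d) (Fin d) ℂ} (hA : A.PosDef) :
    msqrt A * msqrt A = A := by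
  rw [msqrt_eq hA, ← cfc_mul Real.sqrt Real.sqrt A]
  conv_rhs => rw [← cfc_id' ℝ A (ha := (hA.1 : IsSelfAdjoint A))]
  refine cfc_congr fun x hx => ?_
  rw [hA.1.spectrum_real_eq_range_eigenvalues] at hx
  obtain ⟨i, rfl⟩ := hx
  exact Real.mul_self_sqrt (hA.eigenvalues_pos i).le

lemma msqrt_det_isUnit {A : Matrix (Fin d) (Fin d) ℂ} (hA : A.PosDef) :
    IsUnit (msqrt A).det := by
  have h : (msqrt A).det * (msqrt A).det = A.det := by
    rw [← det_mul, msqrt_mul_self hA]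
  have hd : IsUnit A.det := isUnit_iff_ne_zero.2 (ne_of_gt hA.det_pos)
  exact isUnit_of_mul_isUnit_left (h ▸ hd)

lemma mLog_eq_cfc {A : Matrix (Fin d) (Fin d) ℂ} (hA : A.IsHermitian) :
    mLog A = cfc Real.log A := by
  rw [hA.cfc_eq, mLog, dif_pos hA]
  rfl

/-- Conjugation by a unitary matrix as a star algebra homomorphism. -/
noncomputable def conjSAH (c : Matrix (Fin d) (Fin d) ℂ) (hc : cᴴ * c = 1) (hc' : c * cᴴ = 1) :
    Matrix (Fin d) (Fin d) ℂ →⋆ₐ[ℂ] Matrix (Fin d) (Fin d) ℂ where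
  toFun x := cᴴ * x * c
  map_one' := by show cᴴ * 1 * c = 1; rw [mul_one, hc]
  map_mul' x y := by
    calc cᴴ * (x * y) * c = cᴴ * x * (c * cᴴ) * (y * c) := by
          rw [hc', mul_one]; simp only [mul_assoc]
    _ = cᴴ * x * c * (cᴴ * y * c) := by simp only [mul_assoc]
  map_zero' := by show cᴴ * 0 * c = 0; simp
  map_add' x y := by show cᴴ * (x + y) * c = cᴴ * x * c + cᴴ * y * c; rw [mul_add, add_mul]
  commutes' r := by
    simp only [Algebra.algebraMap_eq_smul_one, Matrix.mul_smul, Matrix.smul_mul, mul_one, hc]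
  map_star' x := by
    show cᴴ * star x * c = star (cᴴ * x * c)
    simp only [star_eq_conjTranspose, conjTranspose_mul, conjTranspose_conjTranspose, mul_assoc]

lemma conj_cfc {c : Matrix (Fin d) (Fin d) ℂ} (hc : cᴴ * c = 1) (hc' : c * cᴴ = 1)
    {A : Matrix (Fin d) (Fin d) ℂ} (hA : A.IsHermitian) (f : ℝ → ℝ)
    (hf : ContinuousOn f (spectrum ℝ A)) :
    cᴴ * cfc f A * c = cfc f (cᴴ * A * c) := by
  have hA' : IsSelfAdjoint A := hA
  have hcont : Continuous (conjSAH c hc hc') :=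
    (continuous_const.mul continuous_id).mul continuous_const
  have hφa : IsSelfAdjoint (conjSAH c hc hc' A) :=
    (isHermitian_conjTranspose_mul_mul c hA : Matrix.IsHermitian _)
  exact StarAlgHomClass.map_cfc (S := ℂ) (conjSAH c hc hc') f A hf hcont hA' hφa

lemma spectrum_subset_of_posDef {A : Matrix (Fin d) (Fin d) ℂ} (hA : A.PosDef) :
    spectrum ℝ A ⊆ {(0:ℝ)}ᶜ := by
  rw [Matrix.IsHermitian.spectrum_real_eq_range_eigenvalues hA.1]
  rintro - ⟨i, rfl⟩
  exact (hA.eigenvalues_pos i).ne'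

lemma isUnit_of_unitary {c : Matrix (Fin d) (Fin d) ℂ} (hc' : c * cᴴ = 1) : IsUnit c := by
  apply (isUnit_iff_isUnit_det c).2
  have h : c.det * cᴴ.det = 1 := by rw [← det_mul, hc', det_one]
  exact IsUnit.of_mul_eq_one _ h

lemma mLog_conj {c : Matrix (Fin d) (Fin d) ℂ} (hc : cᴴ * c = 1) (hc' : c * cᴴ = 1)
    {A : Matrix (Fin d) (Fin d) ℂ} (hA : A.PosDef) :
    mLog (cᴴ * A * c) = cᴴ * mLog A * c := by
  have hdet : IsUnit c.det := (isUnit_iff_isUnit_det c).1 (isUnit_of_unitary hc')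
  have hA' : (cᴴ * A * c).PosDef := posDef_conj hA hdet
  rw [mLog_eq_cfc hA.1, mLog_eq_cfc hA'.1]
  exact (conj_cfc hc hc' hA.1 Real.log
    (Real.continuousOn_log.mono (spectrum_subset_of_posDef hA))).symm

lemma mExp_conj {c : Matrix (Fin d) (Fin d) ℂ} (hc : cᴴ * c = 1) (hc' : c * cᴴ = 1)
    (B : Matrix (Fin d) (Fin d) ℂ) :
    mExp (cᴴ * B * c) = cᴴ * mExp B * c := by
  have hu : IsUnit c := isUnit_of_unitary hc'
  have hinv : cᴴ = c⁻¹ := Matrix.inv_eq_left_inv hc ▸ rfl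
  rw [mExp, mExp, hinv]
  exact Matrix.exp_conj' c B hu

lemma mPow_conj {c : Matrix (Fin d) (Fin d) ℂ} (hc : cᴴ * c = 1) (hc' : c * cᴴ = 1)
    {A : Matrix (Fin d) (Fin d) ℂ} (hA : A.PosDef) (t : ℝ) :
    mPow (cᴴ * A * c) t = cᴴ * mPow A t * c := by
  rw [mPow, mPow, mLog_conj hc hc' hA]
  rw [show (t : ℂ) • (cᴴ * mLog A * c) = cᴴ * ((t:ℂ) • mLog A) * c by
    rw [Matrix.mul_smul, Matrix.smul_mul]]
  exact mExp_conj hc hc' _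

end Aux

theorem geo_congruence_equivariant {d : ℕ} (p₁ p₂ a : Matrix (Fin d) (Fin d) ℂ)
    (hp₁ : p₁.PosDef) (hp₂ : p₂.PosDef) (ha : IsUnit a.det)
    (t : ℝ) (ht : t ∈ Set.Icc (0 : ℝ) 1) :
    aᴴ * geo p₁ p₂ t * a = geo (aᴴ * p₁ * a) (aᴴ * p₂ * a) t := by
    classical
  set s₁ := msqrt p₁ with hs₁def
  set s₂ := msqrt (aᴴ * p₁ * a) with hs₂def
  have hq₁ : (aᴴ * p₁ * a).PosDef := posDef_conj hp₁ ha
  have hs₁h : s₁.IsHermitian := msqrt_hermitian hp₁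
  have hs₂h : s₂.IsHermitian := msqrt_hermitian hq₁
  have hs₁m : s₁ * s₁ = p₁ := msqrt_mul_self hp₁
  have hs₂m : s₂ * s₂ = aᴴ * p₁ * a := msqrt_mul_self hq₁
  have hs₁d : IsUnit s₁.det := msqrt_det_isUnit hp₁
  have hs₂d : IsUnit s₂.det := msqrt_det_isUnit hq₁
  have hs₁i : s₁ * s₁⁻¹ = 1 := mul_nonsing_inv s₁ hs₁d
  have hs₁i' : s₁⁻¹ * s₁ = 1 := nonsing_inv_mul s₁ hs₁d
  have hs₂i : s₂ * s₂⁻¹ = 1 := mul_nonsing_inv s₂ hs₂d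
  have hs₂i' : s₂⁻¹ * s₂ = 1 := nonsing_inv_mul s₂ hs₂d
  have hs₁ih : (s₁⁻¹).IsHermitian := by
    rw [Matrix.IsHermitian, conjTranspose_nonsing_inv, hs₁h.eq]
  have hs₂ih : (s₂⁻¹).IsHermitian := by
    rw [Matrix.IsHermitian, conjTranspose_nonsing_inv, hs₂h.eq]
  set c := s₁ * a * s₂⁻¹ with hcdef
  have hcH : cᴴ = s₂⁻¹ * aᴴ * s₁ := by
    rw [hcdef, conjTranspose_mul, conjTranspose_mul, hs₂ih.eq, hs₁h.eq, mul_assoc]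
  have hc : cᴴ * c = 1 := by
    rw [hcH, hcdef]
    calc s₂⁻¹ * aᴴ * s₁ * (s₁ * a * s₂⁻¹)
        = s₂⁻¹ * (aᴴ * (s₁ * s₁) * a) * s₂⁻¹ := by simp only [mul_assoc]
      _ = 1 := by
          rw [hs₁m, ← hs₂m]
          calc s₂⁻¹ * (s₂ * s₂) * s₂⁻¹ = s₂⁻¹ * s₂ * (s₂ * s₂⁻¹) := by
                simp only [mul_assoc]
            _ = 1 := by rw [hs₂i, hs₂i', one_mul]
  have hc' : c * cᴴ = 1 := mul_eq_one_comm.mp hc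
  have hm : (s₁⁻¹ * p₂ * s₁⁻¹).PosDef := by
    have hd : IsUnit (s₁⁻¹).det := isUnit_nonsing_inv_det s₁ hs₁d
    have h := posDef_conj hp₂ hd
    rwa [hs₁ih.eq] at h
  have key : cᴴ * (s₁⁻¹ * p₂ * s₁⁻¹) * c = s₂⁻¹ * (aᴴ * p₂ * a) * s₂⁻¹ := by
    rw [hcH, hcdef]
    calc s₂⁻¹ * aᴴ * s₁ * (s₁⁻¹ * p₂ * s₁⁻¹) * (s₁ * a * s₂⁻¹)
        = s₂⁻¹ * (aᴴ * ((s₁ * s₁⁻¹) * p₂ * (s₁⁻¹ * s₁)) * a) * s₂⁻¹ := by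
          simp only [mul_assoc]
      _ = s₂⁻¹ * (aᴴ * p₂ * a) * s₂⁻¹ := by rw [hs₁i, hs₁i', one_mul, mul_one]
  have h1 : s₂ * cᴴ = aᴴ * s₁ := by
    rw [hcH, ← mul_assoc, ← mul_assoc, hs₂i, one_mul]
  have h2 : c * s₂ = s₁ * a := by
    rw [hcdef, mul_assoc, hs₂i', mul_one]
  simp only [geo]
  rw [← hs₁def, ← hs₂def, ← key, mPow_conj hc hc' hm t]
  calc aᴴ * (s₁ * mPow (s₁⁻¹ * p₂ * s₁⁻¹) t * s₁) * a
      = (aᴴ * s₁) * mPow (s₁⁻¹ * p₂ * s₁⁻¹) t * (s₁ * a) := by simp only [mul_assoc]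
    _ = (s₂ * cᴴ) * mPow (s₁⁻¹ * p₂ * s₁⁻¹) t * (c * s₂) := by rw [h1, h2]
    _ = s₂ * (cᴴ * mPow (s₁⁻¹ * p₂ * s₁⁻¹) t * c) * s₂ := by simp only [mul_assoc]
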